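/- Let A = K[[f_1,…,f_s]] ⊆ F = K[[x_1,…,x_n]] with the length of F/A as an A-module finite. If a, b ∈ (ℝ_{>0})^n satisfy exp(A,a) = exp(A,b), then for every θ ∈ [0,1] one has exp(A, θa + (1−θ)b) = exp(A,a). In particular, for every subset S of ℕ^n the set E_S = {a ∈ (ℝ_{>0})^n : exp(A,a) = S} is convex. -/

import Mathlib

noncomputable section

namespace CanonicalFan

open MvPowerSeries

variable (K : Type*) [Field K] (n : ℕ)

/-- The weight `⟨a, α⟩ = ∑ i, a i * α i` of an exponent `α` with respect to `a`. -/
def weight (a : Fin n → ℝ) (α : Fin n →₀ ℕ) : ℝ := ∑ i, a i * (α i : ℝ)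

/-- The support of a formal power series. -/
def supp (f : MvPowerSeries (Fin n) K) : Set (Fin n →₀ ℕ) :=
  {α | MvPowerSeries.coeff α f ≠ 0}

/-- The `a`-valuation `ν(f,a)`, with the convention `ν(0,a) = +∞`. -/
def nu (a : Fin n → ℝ) (f : MvPowerSeries (Fin n) K) : EReal :=
  sInf ((fun α => ((weight n a α : ℝ) : EReal)) '' supp K n f)

open Classical in
/-- The `a`-initial form `in(f,a)` of a power series. -/
def initialForm (a : Fin n → ℝ) (f : MvPowerSeries (Fin n) K) :
    MvPowerSeries (Fin n) K :=
  fun α => if ((weight n a α : ℝ) : EReal) = nu K n a f then MvPowerSeries.coeff α f else 0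

open Classical in
/-- `exp(f,a)`: the `≺`-maximal element of the support of `in(f,a)`, where `≺` is the
well-ordering `r` (junk value `0` if no maximal element exists). -/
def exponent (r : (Fin n →₀ ℕ) → (Fin n →₀ ℕ) → Prop) (a : Fin n → ℝ)
    (f : MvPowerSeries (Fin n) K) : Fin n →₀ ℕ :=
  if h : ∃ β ∈ supp K n (initialForm K n a f),
      ∀ γ ∈ supp K n (initialForm K n a f), γ = β ∨ r γ β
  then h.choose else 0

/-- The `a`-leading monomial `M(f,a) = c_{exp(f,a)} x^{exp(f,a)}`. -/
def leadMon (r : (Fin n →₀ ℕ) → (Fin n →₀ ℕ) → Prop) (a : Fin n → ℝ)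
    (f : MvPowerSeries (Fin n) K) : MvPowerSeries (Fin n) K :=
  MvPowerSeries.monomial (exponent K n r a f)
    (MvPowerSeries.coeff (exponent K n r a f) f)

/-- The maximal ideal `(x_1, …, x_n)` of `K[[x_1,…,x_n]]`. -/
def mIdeal : Ideal (MvPowerSeries (Fin n) K) :=
  Ideal.span (Set.range (MvPowerSeries.X : Fin n → MvPowerSeries (Fin n) K))

/-- `K[[S]]`: the smallest `K`-subalgebra of `K[[x_1,…,x_n]]` containing `S` and closed in
the `(x_1,…,x_n)`-adic topology; concretely, the adic closure of `Algebra.adjoin K S`. -/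
def closedAdjoin (S : Set (MvPowerSeries (Fin n) K)) :
    Subalgebra K (MvPowerSeries (Fin n) K) where
  carrier := {f | ∀ N : ℕ, ∃ g ∈ Algebra.adjoin K S, f - g ∈ (mIdeal K n) ^ N}
  algebraMap_mem' c N :=
    ⟨algebraMap K _ c, Subalgebra.algebraMap_mem _ c, by simp [Ideal.zero_mem]⟩
  add_mem' {f g} hf hg N := by
    obtain ⟨p, hp, hfp⟩ := hf N
    obtain ⟨q, hq, hgq⟩ := hg N
    exact ⟨p + q, add_mem hp hq, by simpa [add_sub_add_comm] using Ideal.add_mem _ hfp hgq⟩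
  mul_mem' {f g} hf hg N := by
    obtain ⟨p, hp, hfp⟩ := hf N
    obtain ⟨q, hq, hgq⟩ := hg N
    refine ⟨p * q, mul_mem hp hq, ?_⟩
    have h : f * g - p * q = f * (g - q) + (f - p) * q := by ring
    rw [h]
    exact Ideal.add_mem _ (Ideal.mul_mem_left _ _ hgq) (Ideal.mul_mem_right _ _ hfp)

/-- `exp(A,a) = {exp(f,a) : f ∈ A, f ≠ 0}`. -/
def expSet (r : (Fin n →₀ ℕ) → (Fin n →₀ ℕ) → Prop) (a : Fin n → ℝ)
    (A : Set (MvPowerSeries (Fin n) K)) : Set (Fin n →₀ ℕ) :=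
  {β | ∃ f ∈ A, f ≠ 0 ∧ exponent K n r a f = β}

/-- `in(A,a) = K[[in(f,a) : f ∈ A ∖ {0}]]`. -/
def inAlgebra (a : Fin n → ℝ) (A : Set (MvPowerSeries (Fin n) K)) :
    Subalgebra K (MvPowerSeries (Fin n) K) :=
  closedAdjoin K n {g | ∃ f ∈ A, f ≠ 0 ∧ initialForm K n a f = g}

/-- `M(A,a) = K[[M(f,a) : f ∈ A ∖ {0}]]`. -/
def leadAlgebra (r : (Fin n →₀ ℕ) → (Fin n →₀ ℕ) → Prop) (a : Fin n → ℝ)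
    (A : Set (MvPowerSeries (Fin n) K)) : Subalgebra K (MvPowerSeries (Fin n) K) :=
  closedAdjoin K n {g | ∃ f ∈ A, f ≠ 0 ∧ leadMon K n r a f = g}

set_option synthInstance.maxHeartbeats 1000000 in
/-- The length of `F/A` as an `A`-module is finite. -/
def FiniteColength (A : Subalgebra K (MvPowerSeries (Fin n) K)) : Prop :=
  IsFiniteLength A
    (MvPowerSeries (Fin n) K ⧸ LinearMap.range (Algebra.linearMap A (MvPowerSeries (Fin n) K)))

/-- `{g_1,…,g_r}` is an `a`-canonical basis of `A`. -/
def IsCanonicalBasis (r : (Fin n →₀ ℕ) → (Fin n →₀ ℕ) → Prop) (a : Fin n → ℝ)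
    (A : Subalgebra K (MvPowerSeries (Fin n) K)) {m : ℕ}
    (g : Fin m → MvPowerSeries (Fin n) K) : Prop :=
  (∀ i, g i ∈ A ∧ g i ≠ 0) ∧
    leadAlgebra K n r a (A : Set (MvPowerSeries (Fin n) K)) =
      closedAdjoin K n (Set.range fun i => leadMon K n r a (g i))

/-- `{g_1,…,g_r}` is a minimal `a`-canonical basis of `A`. -/
def IsMinimalCanonicalBasis (r : (Fin n →₀ ℕ) → (Fin n →₀ ℕ) → Prop) (a : Fin n → ℝ)
    (A : Subalgebra K (MvPowerSeries (Fin n) K)) {m : ℕ}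
    (g : Fin m → MvPowerSeries (Fin n) K) : Prop :=
  IsCanonicalBasis K n r a A g ∧
    ∀ T : Set (MvPowerSeries (Fin n) K),
      T ⊂ Set.range (fun i => leadMon K n r a (g i)) →
        closedAdjoin K n T ≠ leadAlgebra K n r a (A : Set (MvPowerSeries (Fin n) K))

/-- `{g_1,…,g_r}` is the `a`-reduced canonical basis of `A`. -/
def IsReducedCanonicalBasis (r : (Fin n →₀ ℕ) → (Fin n →₀ ℕ) → Prop) (a : Fin n → ℝ)
    (A : Subalgebra K (MvPowerSeries (Fin n) K)) {m : ℕ}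
    (g : Fin m → MvPowerSeries (Fin n) K) : Prop :=
  IsMinimalCanonicalBasis K n r a A g ∧
    (∀ i, MvPowerSeries.coeff (exponent K n r a (g i)) (g i) = 1) ∧
    ∀ i, ∀ α ∈ supp K n (g i - leadMon K n r a (g i)),
      (MvPowerSeries.monomial α (1 : K)) ∉
        closedAdjoin K n (Set.range fun j => leadMon K n r a (g j))

/-- A power series is a (nonzero) monomial. -/
def IsMonomial (g : MvPowerSeries (Fin n) K) : Prop :=
  ∃ (α : Fin n →₀ ℕ) (c : K), c ≠ 0 ∧ g = MvPowerSeries.monomial α c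


/-! ### Auxiliary machinery for the proof -/

/-- Strict domination order on exponents: `γ` is strictly above `β` for weight `w`. -/
def Above (w : Fin n → ℝ) (r : (Fin n →₀ ℕ) → (Fin n →₀ ℕ) → Prop)
    (γ β : Fin n →₀ ℕ) : Prop :=
  weight n w β < weight n w γ ∨ (weight n w β = weight n w γ ∧ r γ β)

lemma mem_supp_iff {f : MvPowerSeries (Fin n) K} {α : Fin n →₀ ℕ} :
    α ∈ supp K n f ↔ MvPowerSeries.coeff α f ≠ 0 := Iff.rfl

lemma supp_nonempty {f : MvPowerSeries (Fin n) K} (hf : f ≠ 0) : (supp K n f).Nonempty := by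
  by_contra h
  rw [Set.not_nonempty_iff_eq_empty] at h
  refine hf (MvPowerSeries.ext fun d => ?_)
  have hd : d ∉ supp K n f := by rw [h]; exact Set.notMem_empty d
  rw [mem_supp_iff, not_not] at hd
  rw [hd, map_zero]

lemma single_weight_le {w : Fin n → ℝ} (hw : ∀ i, 0 < w i) (α : Fin n →₀ ℕ) (i : Fin n) :
    w i * (α i : ℝ) ≤ weight n w α :=
  Finset.single_le_sum (f := fun j => w j * (α j : ℝ))
    (fun j _ => mul_nonneg (hw j).le (Nat.cast_nonneg _)) (Finset.mem_univ i)

lemma weight_nonneg {w : Fin n → ℝ} (hw : ∀ i, 0 < w i) (α : Fin n →₀ ℕ) :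
    0 ≤ weight n w α :=
  Finset.sum_nonneg fun j _ => mul_nonneg (hw j).le (Nat.cast_nonneg _)

lemma finite_weight_le {w : Fin n → ℝ} (hw : ∀ i, 0 < w i) (W : ℝ) :
    {α : Fin n →₀ ℕ | weight n w α ≤ W}.Finite := by
  classical
  have hsub : {α : Fin n →₀ ℕ | weight n w α ≤ W} ⊆
      (Finsupp.equivFunOnFinite) ⁻¹' (Set.pi Set.univ fun i : Fin n => Set.Iic ⌈W / w i⌉₊) := by
    intro α hα
    rw [Set.mem_preimage, Set.mem_univ_pi]
    intro i
    simp only [Set.mem_Iic, Finsupp.equivFunOnFinite_apply]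
    have h1 : w i * (α i : ℝ) ≤ W := (single_weight_le n hw α i).trans hα
    have h2 : (α i : ℝ) ≤ W / w i := by
      rw [le_div_iff₀ (hw i)]; nlinarith [h1]
    exact_mod_cast h2.trans (Nat.le_ceil _)
  exact ((Set.Finite.pi fun i => Set.finite_Iic _).preimage
    (Finsupp.equivFunOnFinite.injective.injOn)).subset hsub

private lemma finset_rmax {σ : Type*} (r : σ → σ → Prop) [IsTrichotomous σ r] [IsTrans σ r]
    (t : Finset σ) : t.Nonempty → ∃ m ∈ t, ∀ x ∈ t, x = m ∨ r x m := by
  classical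
  induction t using Finset.induction_on with
  | empty => rintro ⟨x, hx⟩; simp at hx
  | @insert a t ha ih =>
    intro _
    rcases t.eq_empty_or_nonempty with rfl | htne
    · exact ⟨a, Finset.mem_insert_self _ _, by simp⟩
    · obtain ⟨m, hmt, hmax⟩ := ih htne
      rcases trichotomous_of r a m with h | h | h
      · refine ⟨m, Finset.mem_insert_of_mem hmt, fun x hx => ?_⟩
        rcases Finset.mem_insert.mp hx with rfl | hx
        · exact Or.inr h
        · exact hmax x hx
      · subst h
        exact ⟨a, Finset.mem_insert_self _ _, fun x hx => by
          rcases Finset.mem_insert.mp hx with rfl | hx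
          · exact Or.inl rfl
          · exact hmax x hx⟩
      · refine ⟨a, Finset.mem_insert_self _ _, fun x hx => ?_⟩
        rcases Finset.mem_insert.mp hx with rfl | hx
        · exact Or.inl rfl
        · rcases hmax x hx with rfl | hx'
          · exact Or.inr h
          · exact Or.inr (trans_of r hx' h)

lemma set_rmax (r : (Fin n →₀ ℕ) → (Fin n →₀ ℕ) → Prop) (hr : IsWellOrder (Fin n →₀ ℕ) r)
    {s : Set (Fin n →₀ ℕ)} (hfin : s.Finite) (hne : s.Nonempty) :
    ∃ m ∈ s, ∀ x ∈ s, x = m ∨ r x m := by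
  haveI : IsWellOrder (Fin n →₀ ℕ) r := hr
  obtain ⟨m, hm, h⟩ := finset_rmax r hfin.toFinset (by simpa using hne)
  exact ⟨m, by simpa using hm, fun x hx => h x (by simpa using hx)⟩

lemma exists_wmin {w : Fin n → ℝ} (hw : ∀ i, 0 < w i) {s : Set (Fin n →₀ ℕ)}
    (hne : s.Nonempty) : ∃ m ∈ s, ∀ x ∈ s, weight n w m ≤ weight n w x := by
  obtain ⟨x0, hx0⟩ := hne
  have hs' : {γ ∈ s | weight n w γ ≤ weight n w x0}.Finite :=
    (finite_weight_le n hw (weight n w x0)).subset fun γ h => h.2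
  obtain ⟨m, hm, hmin⟩ := Set.exists_min_image _ (weight n w) hs' ⟨x0, hx0, le_refl _⟩
  refine ⟨m, hm.1, fun x hx => ?_⟩
  by_cases h : weight n w x ≤ weight n w x0
  · exact hmin x ⟨hx, h⟩
  · exact hm.2.trans (le_of_not_ge h)

lemma nu_and_initial {w : Fin n → ℝ} (hw : ∀ i, 0 < w i) {f : MvPowerSeries (Fin n) K}
    {m : Fin n →₀ ℕ} (hm : m ∈ supp K n f)
    (hmin : ∀ x ∈ supp K n f, weight n w m ≤ weight n w x) (γ : Fin n →₀ ℕ) :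
    γ ∈ supp K n (initialForm K n w f) ↔ γ ∈ supp K n f ∧ weight n w γ = weight n w m := by
  have hnu : nu K n w f = ((weight n w m : ℝ) : EReal) :=
    IsLeast.csInf_eq ⟨⟨m, hm, rfl⟩, by rintro x ⟨γ', hγ', rfl⟩; exact EReal.coe_le_coe_iff.mpr (hmin γ' hγ')⟩
  have hco : MvPowerSeries.coeff γ (initialForm K n w f)
      = if ((weight n w γ : ℝ) : EReal) = nu K n w f then MvPowerSeries.coeff γ f else 0 := rfl
  constructor
  · intro hγ
    rw [mem_supp_iff, hco, hnu] at hγ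
    by_cases hc : ((weight n w γ : ℝ) : EReal) = ((weight n w m : ℝ) : EReal)
    · rw [if_pos hc] at hγ
      exact ⟨hγ, by exact_mod_cast hc⟩
    · rw [if_neg hc] at hγ; exact absurd rfl hγ
  · rintro ⟨h1, h2⟩
    rw [mem_supp_iff, hco, hnu, if_pos (by exact_mod_cast h2)]
    exact h1

lemma exponent_eq_iff (r : (Fin n →₀ ℕ) → (Fin n →₀ ℕ) → Prop)
    (hr : IsWellOrder (Fin n →₀ ℕ) r) {w : Fin n → ℝ}
    (hw : ∀ i, 0 < w i) {f : MvPowerSeries (Fin n) K} (hf : f ≠ 0) (β : Fin n →₀ ℕ) :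
    exponent K n r w f = β ↔
      β ∈ supp K n f ∧ ∀ γ ∈ supp K n f, γ ≠ β → Above n w r γ β := by
  haveI : IsWellOrder (Fin n →₀ ℕ) r := hr
  obtain ⟨m, hm, hmin⟩ := exists_wmin n hw (supp_nonempty K n hf)
  have hsupp := fun γ => nu_and_initial K n hw hm hmin γ
  have hfin : (supp K n (initialForm K n w f)).Finite := by
    apply (finite_weight_le n hw (weight n w m)).subset
    intro γ hγ
    exact le_of_eq ((hsupp γ).mp hγ).2
  have hnein : (supp K n (initialForm K n w f)).Nonempty := ⟨m, (hsupp m).mpr ⟨hm, rfl⟩⟩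
  obtain ⟨M, hM, hMmax⟩ := set_rmax n r hr hfin hnein
  have hex : ∃ b ∈ supp K n (initialForm K n w f),
      ∀ γ ∈ supp K n (initialForm K n w f), γ = b ∨ r γ b := ⟨M, hM, hMmax⟩
  have hexp : exponent K n r w f = hex.choose := dif_pos hex
  have hspec := hex.choose_spec
  have key : ∀ b, exponent K n r w f = b ↔
      (b ∈ supp K n (initialForm K n w f) ∧
        ∀ γ ∈ supp K n (initialForm K n w f), γ = b ∨ r γ b) := by
    intro b
    constructor
    · rintro rfl
      rw [hexp]
      exact hspec
    · rintro ⟨hb, hbmax⟩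
      rw [hexp]
      rcases hbmax hex.choose hspec.1 with h | h
      · exact h
      · rcases hspec.2 b hb with h' | h'
        · exact h'.symm
        · exact absurd h (asymm_of r h')
  rw [key β]
  constructor
  · rintro ⟨hβin, hβmax⟩
    obtain ⟨hβf, hβw⟩ := (hsupp β).mp hβin
    refine ⟨hβf, fun γ hγ hne' => ?_⟩
    rcases lt_or_eq_of_le (hmin γ hγ) with hlt | heq
    · left; rw [hβw]; exact hlt
    · have hγin : γ ∈ supp K n (initialForm K n w f) := (hsupp γ).mpr ⟨hγ, heq.symm⟩
      rcases hβmax γ hγin with h | h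
      · exact absurd h hne'
      · right; exact ⟨by rw [hβw, ← heq], h⟩
  · rintro ⟨hβf, hdom⟩
    have hβw : weight n w β = weight n w m := by
      rcases lt_or_eq_of_le (hmin β hβf) with hlt | heq
      · have hne' : m ≠ β := fun h => by rw [h] at hlt; exact lt_irrefl _ hlt
        rcases hdom m hm hne' with h | h
        · exact absurd (h.trans hlt) (lt_irrefl _)
        · exact absurd h.1 (ne_of_gt hlt)
      · exact heq.symm
    refine ⟨(hsupp β).mpr ⟨hβf, hβw⟩, fun γ hγin => ?_⟩
    obtain ⟨hγf, hγw⟩ := (hsupp γ).mp hγin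
    by_cases hne' : γ = β
    · exact Or.inl hne'
    · rcases hdom γ hγf hne' with h | h
      · exfalso; rw [hβw, hγw] at h; exact lt_irrefl _ h
      · exact Or.inr h.2

lemma exponent_spec (r : (Fin n →₀ ℕ) → (Fin n →₀ ℕ) → Prop)
    (hr : IsWellOrder (Fin n →₀ ℕ) r) {w : Fin n → ℝ}
    (hw : ∀ i, 0 < w i) {f : MvPowerSeries (Fin n) K} (hf : f ≠ 0) :
    exponent K n r w f ∈ supp K n f ∧
      ∀ γ ∈ supp K n f, γ ≠ exponent K n r w f → Above n w r γ (exponent K n r w f) :=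
  (exponent_eq_iff K n r hr hw hf _).mp rfl


lemma above_weight_le {w : Fin n → ℝ} {r : (Fin n →₀ ℕ) → (Fin n →₀ ℕ) → Prop}
    {γ β : Fin n →₀ ℕ} (h : Above n w r γ β) : weight n w β ≤ weight n w γ := by
  rcases h with h | h
  · exact h.le
  · exact h.1.le

lemma above_trans {w : Fin n → ℝ} {r : (Fin n →₀ ℕ) → (Fin n →₀ ℕ) → Prop}
    (hr : IsWellOrder (Fin n →₀ ℕ) r) {γ δ β : Fin n →₀ ℕ}
    (h1 : Above n w r γ δ) (h2 : Above n w r δ β) : Above n w r γ β := by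
  haveI : IsWellOrder (Fin n →₀ ℕ) r := hr
  rcases h1 with h1 | h1 <;> rcases h2 with h2 | h2
  · exact Or.inl (h2.trans h1)
  · exact Or.inl (h2.1 ▸ h1)
  · exact Or.inl (h1.1 ▸ h2)
  · exact Or.inr ⟨h2.1.trans h1.1, trans_of r h1.2 h2.2⟩

lemma above_irrefl {w : Fin n → ℝ} {r : (Fin n →₀ ℕ) → (Fin n →₀ ℕ) → Prop}
    (hr : IsWellOrder (Fin n →₀ ℕ) r) {γ : Fin n →₀ ℕ} (h : Above n w r γ γ) : False := by
  haveI : IsWellOrder (Fin n →₀ ℕ) r := hr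
  rcases h with h | h
  · exact lt_irrefl _ h
  · exact irrefl_of r γ h.2

lemma above_ne {w : Fin n → ℝ} {r : (Fin n →₀ ℕ) → (Fin n →₀ ℕ) → Prop}
    (hr : IsWellOrder (Fin n →₀ ℕ) r) {γ β : Fin n →₀ ℕ} (h : Above n w r γ β) : γ ≠ β :=
  fun he => above_irrefl n hr (he ▸ h)

lemma above_asymm {w : Fin n → ℝ} {r : (Fin n →₀ ℕ) → (Fin n →₀ ℕ) → Prop}
    (hr : IsWellOrder (Fin n →₀ ℕ) r) {γ β : Fin n →₀ ℕ}
    (h1 : Above n w r γ β) (h2 : Above n w r β γ) : False :=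
  above_irrefl n hr (above_trans n hr h1 h2)

lemma supp_smul {c : K} (hc : c ≠ 0) (f : MvPowerSeries (Fin n) K) :
    supp K n (c • f) = supp K n f := by
  ext γ
  rw [mem_supp_iff, mem_supp_iff, map_smul, smul_eq_mul]
  exact ⟨fun h => right_ne_zero_of_mul h, fun h => mul_ne_zero hc h⟩

lemma exponent_smul (r : (Fin n →₀ ℕ) → (Fin n →₀ ℕ) → Prop)
    (hr : IsWellOrder (Fin n →₀ ℕ) r) {w : Fin n → ℝ}
    (hw : ∀ i, 0 < w i) {f : MvPowerSeries (Fin n) K} (hf : f ≠ 0) {c : K} (hc : c ≠ 0) :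
    exponent K n r w (c • f) = exponent K n r w f :=
  (exponent_eq_iff K n r hr hw (smul_ne_zero hc hf) _).mpr
    (by rw [supp_smul K n hc]; exact exponent_spec K n r hr hw hf)

lemma mem_closedAdjoin_iff {S : Set (MvPowerSeries (Fin n) K)} {f : MvPowerSeries (Fin n) K} :
    f ∈ closedAdjoin K n S ↔
      ∀ N : ℕ, ∃ g ∈ Algebra.adjoin K S, f - g ∈ (mIdeal K n) ^ N := Iff.rfl

lemma closedAdjoin_closed {S : Set (MvPowerSeries (Fin n) K)} {g : MvPowerSeries (Fin n) K}
    (hg : ∀ N : ℕ, ∃ p ∈ closedAdjoin K n S, g - p ∈ (mIdeal K n) ^ N) :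
    g ∈ closedAdjoin K n S := by
  rw [mem_closedAdjoin_iff]
  intro N
  obtain ⟨p, hp, hgp⟩ := hg N
  obtain ⟨q, hq, hpq⟩ := (mem_closedAdjoin_iff K n).mp hp N
  exact ⟨q, hq, by simpa [sub_add_sub_cancel] using Ideal.add_mem _ hgp hpq⟩

lemma deg_add_single (δ : Fin n →₀ ℕ) (i : Fin n) :
    (δ + Finsupp.single i 1).sum (fun _ e => e) = δ.sum (fun _ e => e) + 1 := by
  rw [Finsupp.sum_add_index' (fun _ => rfl) (fun _ _ _ => rfl), Finsupp.sum_single_index rfl]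

lemma weight_le_deg {w : Fin n → ℝ} (hw : ∀ i, 0 < w i) (δ : Fin n →₀ ℕ) :
    weight n w δ ≤ (1 + ∑ i, w i) * (δ.sum fun _ e => e : ℕ) := by
  have hC : ∀ i, w i ≤ 1 + ∑ j, w j := by
    intro i
    have h1 : w i ≤ ∑ j, w j :=
      Finset.single_le_sum (f := fun j => w j) (fun j _ => (hw j).le) (Finset.mem_univ i)
    linarith
  have hdeg : (δ.sum fun _ e => e : ℕ) = ∑ i, δ i := Finsupp.sum_fintype _ _ (fun _ => rfl)
  rw [hdeg]
  unfold weight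
  push_cast
  rw [Finset.mul_sum]
  refine Finset.sum_le_sum fun i _ => ?_
  exact mul_le_mul_of_nonneg_right (hC i) (Nat.cast_nonneg _)

lemma mem_mIdeal_pow :
    ∀ (N : ℕ) (f : MvPowerSeries (Fin n) K),
      (∀ δ ∈ supp K n f, N ≤ δ.sum fun _ e => e) → f ∈ (mIdeal K n) ^ N := by
  intro N
  induction N with
  | zero => intro f _; simp [pow_zero, Ideal.one_eq_top]
  | succ N ih =>
    intro f hf
    classical
    set g : Fin n → MvPowerSeries (Fin n) K := fun i δ' =>
      if (∀ l, l < i → δ' l = 0) then MvPowerSeries.coeff (δ' + Finsupp.single i 1) f else 0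
      with hg
    have hgdeg : ∀ i, ∀ δ' ∈ supp K n (g i), N ≤ δ'.sum fun _ e => e := by
      intro i δ' hδ'
      rw [mem_supp_iff] at hδ'
      have hco : MvPowerSeries.coeff δ' (g i) =
          if (∀ l, l < i → δ' l = 0) then
            MvPowerSeries.coeff (δ' + Finsupp.single i 1) f else 0 := rfl
      rw [hco] at hδ'
      by_cases hcond : ∀ l, l < i → δ' l = 0
      · rw [if_pos hcond] at hδ'
        have hmem : (δ' + Finsupp.single i 1) ∈ supp K n f := hδ'
        have := hf _ hmem
        rw [deg_add_single] at this
        omega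
      · rw [if_neg hcond] at hδ'
        exact absurd rfl hδ'
    have hfeq : f = ∑ i : Fin n, (MvPowerSeries.monomial (Finsupp.single i 1) 1) * g i := by
      ext δ
      rw [map_sum]
      have hterm : ∀ i ∈ Finset.univ,
          MvPowerSeries.coeff δ ((MvPowerSeries.monomial (Finsupp.single i 1) 1) * g i)
          = if Finsupp.single i 1 ≤ δ ∧ (∀ l, l < i → δ l = 0) then
              MvPowerSeries.coeff δ f else 0 := by
        intro i _
        rw [MvPowerSeries.coeff_monomial_mul]
        by_cases h1 : Finsupp.single i 1 ≤ δ
        · rw [if_pos h1, one_mul]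
          have hco : MvPowerSeries.coeff (δ - Finsupp.single i 1) (g i) =
              if (∀ l, l < i → (δ - Finsupp.single i 1 : Fin n →₀ ℕ) l = 0) then
                MvPowerSeries.coeff ((δ - Finsupp.single i 1) + Finsupp.single i 1) f
              else 0 := rfl
          rw [hco, tsub_add_cancel_of_le h1]
          have hl : ∀ l, l < i → (δ - Finsupp.single i 1 : Fin n →₀ ℕ) l = δ l := by
            intro l hli
            rw [Finsupp.coe_tsub, Pi.sub_apply, Finsupp.single_apply,
              if_neg (ne_of_gt hli), tsub_zero]
          have hcond : (∀ l, l < i → (δ - Finsupp.single i 1 : Fin n →₀ ℕ) l = 0) ↔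
              (∀ l, l < i → δ l = 0) :=
            ⟨fun h l hli => by rw [← hl l hli]; exact h l hli,
             fun h l hli => by rw [hl l hli]; exact h l hli⟩
          by_cases h2 : ∀ l, l < i → δ l = 0
          · rw [if_pos (hcond.mpr h2), if_pos ⟨h1, h2⟩]
          · rw [if_neg (fun hc => h2 (hcond.mp hc)), if_neg (fun hc => h2 hc.2)]
        · rw [if_neg h1, if_neg (fun hc => h1 hc.1)]
      rw [Finset.sum_congr rfl hterm]
      by_cases hδ0 : δ = 0
      · subst hδ0
        rw [Finset.sum_eq_zero]
        · by_contra hne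
          have h0 : (0 : Fin n →₀ ℕ) ∈ supp K n f := hne
          have := hf _ h0
          simp [Finsupp.sum_zero_index] at this
        · intro i _
          rw [if_neg]
          rintro ⟨h1, -⟩
          rw [Finsupp.single_le_iff] at h1
          simp at h1
      · have hjex : ∃ i, δ i ≠ 0 := by
          by_contra h
          push_neg at h
          exact hδ0 (Finsupp.ext h)
        have hTne : (Finset.univ.filter fun i => δ i ≠ 0).Nonempty := by
          obtain ⟨i, hi⟩ := hjex
          exact ⟨i, Finset.mem_filter.mpr ⟨Finset.mem_univ _, hi⟩⟩
        set T := Finset.univ.filter fun i => δ i ≠ 0 with hT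
        set j := T.min' hTne with hj
        have hδj : δ j ≠ 0 := (Finset.mem_filter.mp (T.min'_mem hTne)).2
        rw [Finset.sum_eq_single j]
        · rw [if_pos]
          constructor
          · exact Finsupp.single_le_iff.mpr (Nat.one_le_iff_ne_zero.mpr hδj)
          · intro l hl
            by_contra hne
            have hlT : l ∈ T := Finset.mem_filter.mpr ⟨Finset.mem_univ _, hne⟩
            exact absurd (T.min'_le l hlT) (not_le.mpr hl)
        · intro b _ hbj
          by_cases hb1 : Finsupp.single b 1 ≤ δ
          · have hδb : δ b ≠ 0 := by
              rw [Finsupp.single_le_iff] at hb1; omega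
            have hbT : b ∈ T := Finset.mem_filter.mpr ⟨Finset.mem_univ _, hδb⟩
            have hjb : j < b := lt_of_le_of_ne (T.min'_le b hbT) (Ne.symm hbj)
            exact if_neg (fun hc => hδj (hc.2 j hjb))
          · exact if_neg (fun hc => hb1 hc.1)
        · intro h
          exact absurd (Finset.mem_univ j) h
    rw [hfeq]
    refine Submodule.sum_mem _ fun i _ => ?_
    have hX : (MvPowerSeries.monomial (Finsupp.single i 1) 1 : MvPowerSeries (Fin n) K)
        ∈ mIdeal K n := Ideal.subset_span ⟨i, rfl⟩
    have hm := Ideal.mul_mem_mul hX (ih (g i) (hgdeg i))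
    rwa [← pow_succ'] at hm


/-- Key reduction lemma: every element of `exp(A,w)` has a monic representative in `A`
whose support, apart from `β` itself, is strictly dominated by `β` and consists of
exponents outside `exp(A,w)`. -/
lemma exists_good_rep (r : (Fin n →₀ ℕ) → (Fin n →₀ ℕ) → Prop)
    (hr : IsWellOrder (Fin n →₀ ℕ) r) {w : Fin n → ℝ} (hw : ∀ i, 0 < w i)
    {A : Subalgebra K (MvPowerSeries (Fin n) K)}
    (hclosed : ∀ g : MvPowerSeries (Fin n) K,
      (∀ N : ℕ, ∃ p ∈ A, g - p ∈ (mIdeal K n) ^ N) → g ∈ A)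
    {β : Fin n →₀ ℕ} (hβ : β ∈ expSet K n r w (A : Set (MvPowerSeries (Fin n) K))) :
    ∃ f ∈ A, MvPowerSeries.coeff β f = 1 ∧
      ∀ γ ∈ supp K n f, γ ≠ β → Above n w r γ β ∧
        γ ∉ expSet K n r w (A : Set (MvPowerSeries (Fin n) K)) := by
  classical
  haveI : IsWellOrder (Fin n →₀ ℕ) r := hr
  set S := expSet K n r w (A : Set (MvPowerSeries (Fin n) K)) with hS
  have hrep : ∀ α ∈ S, ∃ g, g ∈ A ∧ MvPowerSeries.coeff α g = 1 ∧
      ∀ δ ∈ supp K n g, δ ≠ α → Above n w r δ α := by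
    intro α hα
    obtain ⟨g0, hg0A, hg0ne, hg0exp⟩ := hα
    have hspec := (exponent_eq_iff K n r hr hw hg0ne _).mp hg0exp
    have hc : MvPowerSeries.coeff α g0 ≠ 0 := hspec.1
    refine ⟨(MvPowerSeries.coeff α g0)⁻¹ • g0, A.smul_mem hg0A _, ?_, ?_⟩
    · rw [map_smul, smul_eq_mul, inv_mul_cancel₀ hc]
    · intro δ hδ hδα
      rw [supp_smul K n (inv_ne_zero hc)] at hδ
      exact hspec.2 δ hδ hδα
  choose! red hredA hred1 hreddom using hrep
  set bad : MvPowerSeries (Fin n) K → Set (Fin n →₀ ℕ) :=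
    fun g => {γ | γ ∈ supp K n g ∧ γ ≠ β ∧ γ ∈ S} with hbad
  have hpick : ∀ g, (bad g).Nonempty →
      ∃ α ∈ bad g, ∀ γ ∈ bad g, γ ≠ α → Above n w r γ α := by
    intro g hne
    obtain ⟨m, hm, hmmin⟩ := exists_wmin n hw hne
    have hMfin : {γ ∈ bad g | weight n w γ = weight n w m}.Finite :=
      (finite_weight_le n hw (weight n w m)).subset fun γ h => le_of_eq h.2
    obtain ⟨α, hα, hαmax⟩ := set_rmax n r hr hMfin ⟨m, hm, rfl⟩
    refine ⟨α, hα.1, fun γ hγ hγα => ?_⟩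
    rcases lt_or_eq_of_le (hmmin γ hγ) with hlt | heq
    · exact Or.inl (hα.2 ▸ hlt)
    · rcases hαmax γ ⟨hγ, heq.symm⟩ with h | h
      · exact absurd h hγα
      · exact Or.inr ⟨hα.2.trans heq, h⟩
  choose! pk hpkmem hpkdom using hpick
  set step : MvPowerSeries (Fin n) K → MvPowerSeries (Fin n) K := fun g =>
    if (bad g).Nonempty then g - (MvPowerSeries.coeff (pk g) g) • red (pk g) else g
    with hstep
  set Inv : MvPowerSeries (Fin n) K → Prop := fun g =>
    g ∈ A ∧ MvPowerSeries.coeff β g = 1 ∧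
      ∀ γ ∈ supp K n g, γ ≠ β → Above n w r γ β with hInv
  -- properties of one reduction step
  have hstep_eq : ∀ g, (bad g).Nonempty →
      step g = g - (MvPowerSeries.coeff (pk g) g) • red (pk g) := by
    intro g hne; simp only [hstep]; exact if_pos hne
  have hstep_supp : ∀ g, supp K n (step g) ⊆ supp K n g ∪ supp K n (red (pk g)) := by
    intro g γ hγ
    by_cases hne : (bad g).Nonempty
    · rw [hstep_eq g hne] at hγ
      by_contra hcon
      rw [Set.mem_union] at hcon
      push_neg at hcon
      have h1 : MvPowerSeries.coeff γ g = 0 := by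
        have := hcon.1; rwa [mem_supp_iff, not_not] at this
      have h2 : MvPowerSeries.coeff γ (red (pk g)) = 0 := by
        have := hcon.2; rwa [mem_supp_iff, not_not] at this
      rw [mem_supp_iff, map_sub, map_smul, smul_eq_mul, h1, h2, mul_zero, sub_zero] at hγ
      exact hγ rfl
    · simp only [hstep] at hγ
      rw [if_neg hne] at hγ
      exact Set.mem_union_left _ hγ
  have hredcoeffβ : ∀ g, Inv g → (bad g).Nonempty →
      MvPowerSeries.coeff β (red (pk g)) = 0 := by
    intro g hg hne
    obtain ⟨hsupp', hneβ, hSmem⟩ := hpkmem g hne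
    by_contra hcon
    have hβsupp : β ∈ supp K n (red (pk g)) := hcon
    have hAαβ : Above n w r (pk g) β := hg.2.2 (pk g) hsupp' hneβ
    have hAβα : Above n w r β (pk g) := hreddom (pk g) hSmem β hβsupp (Ne.symm hneβ)
    exact above_asymm n hr hAαβ hAβα
  have hstep_inv : ∀ g, Inv g → Inv (step g) := by
    intro g hg
    by_cases hne : (bad g).Nonempty
    · obtain ⟨hsupp', hneβ, hSmem⟩ := hpkmem g hne
      rw [hInv]
      refine ⟨?_, ?_, ?_⟩
      · rw [hstep_eq g hne]
        exact A.sub_mem hg.1 (A.smul_mem (hredA (pk g) hSmem) _)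
      · rw [hstep_eq g hne, map_sub, map_smul, smul_eq_mul, hredcoeffβ g hg hne,
          mul_zero, sub_zero]
        exact hg.2.1
      · intro γ hγ hγβ
        rcases hstep_supp g hγ with h | h
        · exact hg.2.2 γ h hγβ
        · by_cases hγα : γ = pk g
          · rw [hγα]; exact hg.2.2 (pk g) hsupp' hneβ
          · exact above_trans n hr (hreddom (pk g) hSmem γ h hγα)
              (hg.2.2 (pk g) hsupp' hneβ)
    · simp only [hstep]; rw [if_neg hne]; exact hg
  have hstep_pk_gone : ∀ g, Inv g → (bad g).Nonempty → pk g ∉ supp K n (step g) := by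
    intro g hg hne
    obtain ⟨hsupp', hneβ, hSmem⟩ := hpkmem g hne
    rw [mem_supp_iff, not_not, hstep_eq g hne, map_sub, map_smul, smul_eq_mul,
      hred1 (pk g) hSmem, mul_one, sub_self]
  have hstep_bad : ∀ g, Inv g → (bad g).Nonempty →
      ∀ γ ∈ bad (step g), Above n w r γ (pk g) := by
    intro g hg hne γ hγ
    obtain ⟨hγsupp, hγβ, hγS⟩ := hγ
    have hγα : γ ≠ pk g := by
      intro h; rw [h] at hγsupp; exact hstep_pk_gone g hg hne hγsupp
    rcases hstep_supp g hγsupp with h | h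
    · exact hpkdom g hne γ ⟨h, hγβ, hγS⟩ hγα
    · exact hreddom (pk g) (hpkmem g hne).2.2 γ h hγα
  have hstep_diff : ∀ g, (bad g).Nonempty → ∀ δ,
      weight n w δ < weight n w (pk g) →
      MvPowerSeries.coeff δ (step g) = MvPowerSeries.coeff δ g := by
    intro g hne δ hδ
    rw [hstep_eq g hne, map_sub, map_smul, smul_eq_mul]
    have h2 : MvPowerSeries.coeff δ (red (pk g)) = 0 := by
      by_contra hcon
      have hδsupp : δ ∈ supp K n (red (pk g)) := hcon
      by_cases hδα : δ = pk g
      · rw [hδα] at hδ; exact lt_irrefl _ hδ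
      · exact absurd hδ (not_lt.mpr
          (above_weight_le n (hreddom (pk g) (hpkmem g hne).2.2 δ hδsupp hδα)))
    rw [h2, mul_zero, sub_zero]
  -- the iterated sequence
  set F : ℕ → MvPowerSeries (Fin n) K := fun k => step^[k] (red β) with hF
  have hFsucc : ∀ k, F (k + 1) = step (F k) := by
    intro k; rw [hF]; exact Function.iterate_succ_apply' _ _ _
  have hFInv : ∀ k, Inv (F k) := by
    intro k
    induction k with
    | zero =>
      rw [hF]
      exact ⟨hredA β hβ, hred1 β hβ, fun γ hγ hγβ => hreddom β hβ γ hγ hγβ⟩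
    | succ k ih => rw [hFsucc]; exact hstep_inv _ ih
  by_cases hstall : ∃ k, ¬ (bad (F k)).Nonempty
  · obtain ⟨k, hk⟩ := hstall
    refine ⟨F k, (hFInv k).1, (hFInv k).2.1, fun γ hγ hγβ =>
      ⟨(hFInv k).2.2 γ hγ hγβ, fun hγS => hk ⟨γ, hγ, hγβ, hγS⟩⟩⟩
  · push_neg at hstall
    set αs : ℕ → (Fin n →₀ ℕ) := fun k => pk (F k) with hαs
    have hαbad : ∀ k, αs k ∈ bad (F k) := fun k => hpkmem _ (hstall k)
    have hαdom : ∀ k, Above n w r (αs (k + 1)) (αs k) := by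
      intro k
      refine hstep_bad (F k) (hFInv k) (hstall k) (αs (k + 1)) ?_
      rw [← hFsucc]
      exact hαbad (k + 1)
    have hchain : ∀ k l, k < l → Above n w r (αs l) (αs k) := by
      intro k l hkl
      induction l with
      | zero => omega
      | succ l ih =>
        rcases Nat.lt_succ_iff_lt_or_eq.mp hkl with h | h
        · exact above_trans n hr (hαdom l) (ih h)
        · rw [← h]; exact hαdom k
    have hwmono : ∀ k l, k ≤ l → weight n w (αs k) ≤ weight n w (αs l) := by
      intro k l hkl
      rcases lt_or_eq_of_le hkl with h | h
      · exact above_weight_le n (hchain k l h)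
      · rw [h]
    have hescape : ∀ W : ℝ, ∃ k, W < weight n w (αs k) := by
      intro W
      by_contra hcon
      push_neg at hcon
      have hinj : Function.Injective αs := by
        intro i j hij
        by_contra hne
        rcases Nat.lt_or_ge i j with h | h
        · exact above_ne n hr (hchain i j h) (hij ▸ rfl)
        · have h' : j < i := lt_of_le_of_ne h (Ne.symm hne)
          exact above_ne n hr (hchain j i h') (hij ▸ rfl)
      have hfin : (Set.range αs).Finite :=
        (finite_weight_le n hw W).subset (by rintro x ⟨k, rfl⟩; exact hcon k)
      exact (Set.infinite_range_of_injective hinj) hfin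
    have hstab : ∀ δ k l, k ≤ l → weight n w δ < weight n w (αs k) →
        MvPowerSeries.coeff δ (F l) = MvPowerSeries.coeff δ (F k) := by
      intro δ k l hkl hδ
      induction l with
      | zero => have : k = 0 := Nat.le_zero.mp hkl; rw [this]
      | succ l ih =>
        rcases Nat.eq_or_lt_of_le hkl with h | h
        · rw [h]
        · have hkl' : k ≤ l := Nat.lt_succ_iff.mp h
          rw [hFsucc, hstep_diff (F l) (hstall l) δ
            (lt_of_lt_of_le hδ (hwmono k l hkl'))]
          exact ih hkl'
    set Kd : (Fin n →₀ ℕ) → ℕ := fun δ => (hescape (weight n w δ)).choose with hKd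
    have hKdlt : ∀ δ, weight n w δ < weight n w (αs (Kd δ)) := by
      intro δ; rw [hKd]; exact (hescape (weight n w δ)).choose_spec
    set flim : MvPowerSeries (Fin n) K :=
      fun δ => MvPowerSeries.coeff δ (F (Kd δ)) with hflim
    have hflimco : ∀ δ, MvPowerSeries.coeff δ flim = MvPowerSeries.coeff δ (F (Kd δ)) :=
      fun δ => rfl
    have hflimco' : ∀ δ k, weight n w δ < weight n w (αs k) →
        MvPowerSeries.coeff δ flim = MvPowerSeries.coeff δ (F k) := by
      intro δ k hδ
      rw [hflimco δ]
      have h1 := hstab δ (Kd δ) (max (Kd δ) k) (le_max_left _ _) (hKdlt δ)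
      have h2 := hstab δ k (max (Kd δ) k) (le_max_right _ _) hδ
      rw [← h1, h2]
    refine ⟨flim, ?_, ?_, ?_⟩
    · refine hclosed flim fun N => ?_
      set C : ℝ := 1 + ∑ i, w i with hC
      have hCpos : 0 < C := by
        rw [hC]
        have : (0:ℝ) ≤ ∑ i, w i := Finset.sum_nonneg fun i _ => (hw i).le
        linarith
      obtain ⟨k, hk⟩ := hescape (C * N)
      refine ⟨F k, (hFInv k).1, ?_⟩
      refine mem_mIdeal_pow K n N _ fun δ hδ => ?_
      have hδw : ¬ weight n w δ < weight n w (αs k) := by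
        intro hcon
        rw [mem_supp_iff, map_sub, hflimco' δ k hcon, sub_self] at hδ
        exact hδ rfl
      push_neg at hδw
      have h1 : C * N < weight n w δ := lt_of_lt_of_le hk hδw
      have h2 : weight n w δ ≤ C * ((δ.sum fun _ e => e : ℕ) : ℝ) := by
        rw [hC]; exact weight_le_deg n hw δ
      have h3 : C * (N : ℝ) < C * ((δ.sum fun _ e => e : ℕ) : ℝ) := lt_of_lt_of_le h1 h2
      have h4 : (N : ℝ) < ((δ.sum fun _ e => e : ℕ) : ℝ) := lt_of_mul_lt_mul_left h3 hCpos.le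
      exact_mod_cast h4.le
    · rw [hflimco β]
      exact (hFInv (Kd β)).2.1
    · intro γ hγ hγβ
      have hγsupp : γ ∈ supp K n (F (Kd γ)) := by
        rw [mem_supp_iff, ← hflimco γ]
        exact hγ
      refine ⟨(hFInv (Kd γ)).2.2 γ hγsupp hγβ, fun hγS => ?_⟩
      have hγbad : γ ∈ bad (F (Kd γ)) := ⟨hγsupp, hγβ, hγS⟩
      by_cases hγα : γ = αs (Kd γ)
      · have hlt := hKdlt γ
        rw [← hγα] at hlt
        exact lt_irrefl _ hlt
      · have := above_weight_le n (hpkdom (F (Kd γ)) (hstall (Kd γ)) γ hγbad hγα)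
        exact absurd (hKdlt γ) (not_lt.mpr this)

/-- if `exp(A,a) = exp(A,b)` then `exp(A, θa+(1−θ)b) = exp(A,a)` for
`θ ∈ [0,1]`; in particular each `E_S` is convex. -/
theorem expSet_convex
    (r : (Fin n →₀ ℕ) → (Fin n →₀ ℕ) → Prop) (hr : IsWellOrder (Fin n →₀ ℕ) r)
    (hradd : ∀ α β γ : Fin n →₀ ℕ, r α β → r (α + γ) (β + γ))
    (s : ℕ) (f : Fin s → MvPowerSeries (Fin n) K) (hf : ∀ i, f i ≠ 0)
    (A : Subalgebra K (MvPowerSeries (Fin n) K)) (hA : A = closedAdjoin K n (Set.range f))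
    (hlen : FiniteColength K n A) :
    (∀ a b : Fin n → ℝ, (∀ i, 0 < a i) → (∀ i, 0 < b i) →
      expSet K n r a (A : Set (MvPowerSeries (Fin n) K)) =
        expSet K n r b (A : Set (MvPowerSeries (Fin n) K)) →
      ∀ θ : ℝ, θ ∈ Set.Icc (0 : ℝ) 1 →
        expSet K n r (θ • a + (1 - θ) • b) (A : Set (MvPowerSeries (Fin n) K)) =
          expSet K n r a (A : Set (MvPowerSeries (Fin n) K))) ∧
    ∀ S : Set (Fin n →₀ ℕ),
      Convex ℝ {a : Fin n → ℝ | (∀ i, 0 < a i) ∧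
        expSet K n r a (A : Set (MvPowerSeries (Fin n) K)) = S} := by
  have hclosed : ∀ g : MvPowerSeries (Fin n) K,
      (∀ N : ℕ, ∃ p ∈ A, g - p ∈ (mIdeal K n) ^ N) → g ∈ A := by
    subst hA
    exact fun g hg => closedAdjoin_closed K n hg
  have main : ∀ a b : Fin n → ℝ, (∀ i, 0 < a i) → (∀ i, 0 < b i) →
      expSet K n r a (A : Set (MvPowerSeries (Fin n) K)) =
        expSet K n r b (A : Set (MvPowerSeries (Fin n) K)) →
      ∀ θ : ℝ, θ ∈ Set.Icc (0 : ℝ) 1 →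
        expSet K n r (θ • a + (1 - θ) • b) (A : Set (MvPowerSeries (Fin n) K)) =
          expSet K n r a (A : Set (MvPowerSeries (Fin n) K)) := by
    intro a b ha hb hab θ hθ
    set c : Fin n → ℝ := θ • a + (1 - θ) • b with hc
    have hcval : ∀ i, c i = θ * a i + (1 - θ) * b i := by
      intro i
      rw [hc]
      simp [Pi.add_apply, Pi.smul_apply, smul_eq_mul]
    have hcpos : ∀ i, 0 < c i := by
      intro i
      rw [hcval i]
      rcases eq_or_lt_of_le hθ.1 with h0 | h0
      · rw [← h0]
        simpa using hb i
      · have h1 : 0 < θ * a i := mul_pos h0 (ha i)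
        have h2 : 0 ≤ (1 - θ) * b i := mul_nonneg (by linarith [hθ.2]) (hb i).le
        linarith
    have hwc : ∀ γ, weight n c γ = θ * weight n a γ + (1 - θ) * weight n b γ := by
      intro γ
      unfold weight
      rw [Finset.mul_sum, Finset.mul_sum, ← Finset.sum_add_distrib]
      refine Finset.sum_congr rfl fun i _ => ?_
      rw [hcval i]
      ring
    have hcombo : ∀ γ β' : Fin n →₀ ℕ,
        Above n a r γ β' → Above n b r γ β' → Above n c r γ β' := by
      intro γ β' hA' hB'
      have haw : weight n a β' ≤ weight n a γ := above_weight_le n hA'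
      have hbw : weight n b β' ≤ weight n b γ := above_weight_le n hB'
      have hle : weight n c β' ≤ weight n c γ := by
        rw [hwc, hwc]
        have h1 : 0 ≤ θ * (weight n a γ - weight n a β') := mul_nonneg hθ.1 (by linarith)
        have h2 : 0 ≤ (1 - θ) * (weight n b γ - weight n b β') :=
          mul_nonneg (by linarith [hθ.2]) (by linarith)
        nlinarith
      rcases lt_or_eq_of_le hle with h | h
      · exact Or.inl h
      · right
        refine ⟨h, ?_⟩
        rw [hwc, hwc] at h
        rcases eq_or_lt_of_le hθ.1 with hθ0 | hθpos
        · have hwb : weight n b β' = weight n b γ := by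
            rw [← hθ0] at h
            simpa using h
          rcases hB' with hB' | hB'
          · exact absurd hwb (ne_of_lt hB')
          · exact hB'.2
        · have h3 : θ * (weight n a γ - weight n a β') +
              (1 - θ) * (weight n b γ - weight n b β') = 0 := by linear_combination -h
          have h2 : 0 ≤ (1 - θ) * (weight n b γ - weight n b β') :=
            mul_nonneg (by linarith [hθ.2]) (by linarith)
          have h1 : 0 ≤ θ * (weight n a γ - weight n a β') := mul_nonneg hθ.1 (by linarith)
          have h4 : θ * (weight n a γ - weight n a β') = 0 := by linarith
          have hwa : weight n a β' = weight n a γ := by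
            rcases mul_eq_zero.mp h4 with h5 | h5
            · exact absurd h5 (ne_of_gt hθpos)
            · linarith
          rcases hA' with hA' | hA'
          · exact absurd hwa (ne_of_lt hA')
          · exact hA'.2
    have h1 : expSet K n r a (A : Set (MvPowerSeries (Fin n) K)) ⊆
        expSet K n r c (A : Set (MvPowerSeries (Fin n) K)) := by
      intro β hβ
      obtain ⟨u, huA, hu1, hudom⟩ := exists_good_rep K n r hr ha hclosed hβ
      have hune : u ≠ 0 := fun h => by
        rw [h, map_zero] at hu1
        exact one_ne_zero hu1.symm
      have hβsupp : β ∈ supp K n u := by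
        rw [mem_supp_iff, hu1]
        exact one_ne_zero
      have hexpb_mem : exponent K n r b u ∈
          expSet K n r b (A : Set (MvPowerSeries (Fin n) K)) := ⟨u, huA, hune, rfl⟩
      have hexpb_mem' : exponent K n r b u ∈
          expSet K n r a (A : Set (MvPowerSeries (Fin n) K)) := by
        rw [hab]
        exact hexpb_mem
      have hexpb_supp : exponent K n r b u ∈ supp K n u :=
        (exponent_spec K n r hr hb hune).1
      have hexpb_eq : exponent K n r b u = β := by
        by_contra hne
        exact (hudom _ hexpb_supp hne).2 hexpb_mem'
      have hbdom : ∀ γ ∈ supp K n u, γ ≠ β → Above n b r γ β :=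
        ((exponent_eq_iff K n r hr hb hune β).mp hexpb_eq).2
      have hexpc : exponent K n r c u = β :=
        (exponent_eq_iff K n r hr hcpos hune β).mpr
          ⟨hβsupp, fun γ hγ hγβ => hcombo γ β (hudom γ hγ hγβ).1 (hbdom γ hγ hγβ)⟩
      exact ⟨u, huA, hune, hexpc⟩
    have h2 : expSet K n r c (A : Set (MvPowerSeries (Fin n) K)) ⊆
        expSet K n r a (A : Set (MvPowerSeries (Fin n) K)) := by
      intro β hβ
      obtain ⟨u, huA, hu1, hudom⟩ := exists_good_rep K n r hr hcpos hclosed hβ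
      have hune : u ≠ 0 := fun h => by
        rw [h, map_zero] at hu1
        exact one_ne_zero hu1.symm
      have hexpa_mem : exponent K n r a u ∈
          expSet K n r a (A : Set (MvPowerSeries (Fin n) K)) := ⟨u, huA, hune, rfl⟩
      have hexpa_supp : exponent K n r a u ∈ supp K n u :=
        (exponent_spec K n r hr ha hune).1
      by_cases h : exponent K n r a u = β
      · rw [← h]
        exact hexpa_mem
      · exact absurd (h1 hexpa_mem) (hudom _ hexpa_supp h).2
    exact Set.Subset.antisymm h2 h1
  refine ⟨main, fun S => ?_⟩
  intro x hx y hy p q hp hq hpq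
  obtain ⟨hxpos, hxS⟩ := hx
  obtain ⟨hypos, hyS⟩ := hy
  have hq' : q = 1 - p := by linarith
  subst hq'
  have hpIcc : p ∈ Set.Icc (0 : ℝ) 1 := ⟨hp, by linarith⟩
  constructor
  · intro i
    have hval : (p • x + (1 - p) • y) i = p * x i + (1 - p) * y i := by
      simp [Pi.add_apply, Pi.smul_apply, smul_eq_mul]
    rw [hval]
    rcases eq_or_lt_of_le hp with h0 | h0
    · rw [← h0]
      simpa using hypos i
    · have ha1 : 0 < p * x i := mul_pos h0 (hxpos i)
      have ha2 : 0 ≤ (1 - p) * y i := mul_nonneg (by linarith) (hypos i).le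
      linarith
  · rw [main x y hxpos hypos (hxS.trans hyS.symm) p hpIcc]
    exact hxS

end CanonicalFan
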